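/- Let A be an n×n real SPD matrix, 𝓑 an m×m real SPD matrix, Π an n×m real matrix and ℐ an m×n real matrix with Π ℐ = Iₙ (the n×n identity). Assume there is a constant β > 0 with (ℐv)ᵀ 𝓑 (ℐv) ≤ β · vᵀ A v for all v ∈ ℝⁿ. Then vᵀ A⁻¹ v ≤ β · vᵀ (Π 𝓑⁻¹ Πᵀ) v for all v ∈ ℝⁿ. -/

import Mathlib

open Matrix

private lemma symm_dot {m : ℕ} {B : Matrix (Fin m) (Fin m) ℝ} (hB : B.IsHermitian)
    (a x : Fin m → ℝ) : a ⬝ᵥ B.mulVec x = x ⬝ᵥ B.mulVec a := by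
  rw [dotProduct_mulVec, dotProduct_comm, ← mulVec_transpose]
  congr 1
  have : Bᵀ = B := (by simpa [conjTranspose, Matrix.map_id] using hB : B.IsSymm)
  rw [this]

/-- Stability half of the fictitious space lemma. -/
theorem stmt_0 {n m : ℕ}
    (A : Matrix (Fin n) (Fin n) ℝ) (hA : A.PosDef)
    (B : Matrix (Fin m) (Fin m) ℝ) (hB : B.PosDef)
    (P : Matrix (Fin n) (Fin m) ℝ) (J : Matrix (Fin m) (Fin n) ℝ)
    (hPJ : P * J = 1)
    (β : ℝ) (hβ : 0 < β)
    (hstab : ∀ v : Fin n → ℝ,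
      (J.mulVec v) ⬝ᵥ B.mulVec (J.mulVec v) ≤ β * (v ⬝ᵥ A.mulVec v)) :
    ∀ v : Fin n → ℝ,
      v ⬝ᵥ A⁻¹.mulVec v ≤ β * (v ⬝ᵥ (P * B⁻¹ * Pᵀ).mulVec v) := by
  intro v
  have hAdet : IsUnit A.det := isUnit_iff_ne_zero.mpr hA.det_pos.ne'
  have hBdet : IsUnit B.det := isUnit_iff_ne_zero.mpr hB.det_pos.ne'
  set w : Fin n → ℝ := A⁻¹.mulVec v with hw
  set x : Fin m → ℝ := J.mulVec w with hx
  set a : Fin m → ℝ := B⁻¹.mulVec (Pᵀ.mulVec v) with ha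
  have hAw : A.mulVec w = v := by
    rw [hw, mulVec_mulVec, A.mul_nonsing_inv hAdet, one_mulVec]
  have hBa : B.mulVec a = Pᵀ.mulVec v := by
    rw [ha, mulVec_mulVec, B.mul_nonsing_inv hBdet, one_mulVec]
  -- p = a ⬝ B x
  have h1 : v ⬝ᵥ w = a ⬝ᵥ B.mulVec x := by
    have hPx : P.mulVec x = w := by
      rw [hx, mulVec_mulVec, hPJ, one_mulVec]
    calc v ⬝ᵥ w = v ⬝ᵥ P.mulVec x := by rw [hPx]
    _ = Pᵀ.mulVec v ⬝ᵥ x := by rw [dotProduct_mulVec, ← mulVec_transpose]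
    _ = B.mulVec a ⬝ᵥ x := by rw [hBa]
    _ = a ⬝ᵥ B.mulVec x := by
        rw [dotProduct_comm, symm_dot hB.1]
  -- q = a ⬝ B a
  have h2 : v ⬝ᵥ (P * B⁻¹ * Pᵀ).mulVec v = a ⬝ᵥ B.mulVec a := by
    rw [hBa]
    calc v ⬝ᵥ (P * B⁻¹ * Pᵀ).mulVec v
        = v ⬝ᵥ P.mulVec ((B⁻¹ * Pᵀ).mulVec v) := by
          rw [mulVec_mulVec, Matrix.mul_assoc]
    _ = Pᵀ.mulVec v ⬝ᵥ (B⁻¹.mulVec (Pᵀ.mulVec v)) := by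
          rw [dotProduct_mulVec, ← mulVec_transpose, mulVec_mulVec]
    _ = a ⬝ᵥ Pᵀ.mulVec v := by rw [← ha, dotProduct_comm]
  have h3 : x ⬝ᵥ B.mulVec x ≤ β * (v ⬝ᵥ w) := by
    have := hstab w
    rwa [hAw, ← hx, dotProduct_comm w v] at this
  have h4 : 0 ≤ (a - β⁻¹ • x) ⬝ᵥ B.mulVec (a - β⁻¹ • x) := by
    have := hB.posSemidef.dotProduct_mulVec_nonneg (a - β⁻¹ • x)
    simpa using this
  have hsymm : x ⬝ᵥ B.mulVec a = a ⬝ᵥ B.mulVec x := symm_dot hB.1 x a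
  have hexp : (a - β⁻¹ • x) ⬝ᵥ B.mulVec (a - β⁻¹ • x)
      = a ⬝ᵥ B.mulVec a - 2 * β⁻¹ * (a ⬝ᵥ B.mulVec x) + β⁻¹ * β⁻¹ * (x ⬝ᵥ B.mulVec x) := by
    simp only [mulVec_sub, mulVec_smul, sub_dotProduct, dotProduct_sub, smul_dotProduct,
      dotProduct_smul, smul_eq_mul, hsymm]
    ring
  have hβinv : 0 < β⁻¹ := inv_pos.mpr hβ
  have h5 := mul_le_mul_of_nonneg_left h3 (le_of_lt (mul_pos hβinv hβinv))
  have h6 : β⁻¹ * β⁻¹ * (β * (v ⬝ᵥ w)) = β⁻¹ * (v ⬝ᵥ w) := by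
    field_simp
  rw [hexp, ← h1] at h4
  have key : β⁻¹ * (v ⬝ᵥ w) ≤ v ⬝ᵥ (P * B⁻¹ * Pᵀ).mulVec v := by
    nlinarith [h4, h5, h6, h1, h2]
  have hfin := mul_le_mul_of_nonneg_left key hβ.le
  rwa [← mul_assoc, mul_inv_cancel₀ hβ.ne', one_mul] at hfin
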